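/- Let D be a bounded open convex subset of ℝᴺ realized as a cross section of an open cone C containing no lines, and let x, y be distinct points of the Euclidean boundary ∂D. Then the reverse-Funk horofunctions ψ_x := r_C(·,x) − r_C(b,x) and ψ_y := r_C(·,y) − r_C(b,y) on C are distinct functions. Consequently, x ↦ ψ_x is injective from ∂D into functions on C. -/

import Mathlib

open Set Filter Topology

variable {V : Type*} [NormedAddCommGroup V] [NormedSpace ℝ V] [FiniteDimensional ℝ V]

/-- An open cone: non-empty, open, convex, invariant under positive scaling, not containing 0. -/
def IsOpenCone (T : Set V) : Prop :=
  T.Nonempty ∧ IsOpen T ∧ Convex ℝ T ∧ (∀ c : ℝ, 0 < c → ∀ u ∈ T, c • u ∈ T) ∧ (0 : V) ∉ T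

/-- The gauge `M_T(y/x) = inf {λ > 0 : λ • x - y ∈ closure T}`. -/
noncomputable def funkM (T : Set V) (y x : V) : ℝ :=
  sInf {l : ℝ | 0 < l ∧ l • x - y ∈ closure T}

/-- The Funk metric `F_T(x,y) = log inf {λ > 0 : λ • y - x ∈ closure T}`. -/
noncomputable def funkF (T : Set V) (x y : V) : ℝ := Real.log (funkM T x y)

/-- The reverse Funk metric `r_T(x,y) = F_T(y,x)`. -/
noncomputable def revF (T : Set V) (x y : V) : ℝ := Real.log (funkM T y x)

/-- The Hilbert metric as the symmetrisation of the Funk metric. -/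
noncomputable def hilD (T : Set V) (x y : V) : ℝ := funkF T x y + revF T x y

/-- The dual cone, as a set of continuous linear functionals. -/
def dualCone (T : Set V) : Set (V →L[ℝ] ℝ) := {z | ∀ u ∈ T, 0 ≤ z u}

/-- The open tangent cone `τ(T,x) = {λ (w - x) : λ > 0, w ∈ T}`. -/
def openTangent (T : Set V) (x : V) : Set V :=
  {v | ∃ l : ℝ, 0 < l ∧ ∃ w ∈ T, v = l • (w - x)}


lemma zero_mem_closure_cone {C : Set V} (hC : IsOpenCone C) : (0:V) ∈ closure C := by
  obtain ⟨v, hv⟩ := hC.1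
  have h : Filter.Tendsto (fun n : ℕ => (1 / (n + 1) : ℝ) • v) atTop (𝓝 ((0:ℝ) • v)) :=
    tendsto_one_div_add_atTop_nhds_zero_nat.smul_const v
  rw [zero_smul] at h
  exact mem_closure_of_tendsto h (Filter.Eventually.of_forall fun n =>
    hC.2.2.2.1 (1 / (n + 1) : ℝ) (by positivity) v hv)

lemma smul_mem_closure_cone {C : Set V} (hC : IsOpenCone C) {c : ℝ} (hc : 0 ≤ c)
    {u : V} (hu : u ∈ closure C) : c • u ∈ closure C := by
  rcases eq_or_lt_of_le hc with h | h
  · simpa [← h] using zero_mem_closure_cone hC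
  · obtain ⟨s, hs, hlim⟩ := mem_closure_iff_seq_limit.1 hu
    exact mem_closure_of_tendsto (hlim.const_smul c)
      (Filter.Eventually.of_forall fun n => hC.2.2.2.1 c h _ (hs n))

lemma add_mem_closure_cone {C : Set V} (hC : IsOpenCone C) {u w : V}
    (hu : u ∈ closure C) (hw : w ∈ closure C) : u + w ∈ closure C := by
  have h := hC.2.2.1.closure hu hw (by norm_num : (0:ℝ) ≤ 1/2) (by norm_num : (0:ℝ) ≤ 1/2)
    (by norm_num)
  have h2 := smul_mem_closure_cone hC (by norm_num : (0:ℝ) ≤ 2) h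
  have e : (2:ℝ) • ((1/2 : ℝ) • u + (1/2 : ℝ) • w) = u + w := by module
  rwa [e] at h2

lemma psi_nonneg {C : Set V} (ψ : V →L[ℝ] ℝ) (hψ : ∀ u ∈ closure C, u ≠ 0 → 0 < ψ u)
    {u : V} (hu : u ∈ closure C) : 0 ≤ ψ u := by
  rcases eq_or_ne u 0 with rfl | h
  · simp
  · exact (hψ u hu h).le

lemma funkM_spec {C : Set V} (hC : IsOpenCone C) (ψ : V →L[ℝ] ℝ)
    (hψ : ∀ u ∈ closure C, u ≠ 0 → 0 < ψ u)
    {u w : V} (hu : u ∈ C) (hu1 : ψ u = 1) (hw : w ∈ closure C) (hw1 : ψ w = 1) :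
    1 ≤ funkM C w u ∧ funkM C w u • u - w ∈ closure C ∧
      ∀ l : ℝ, 0 < l → l • u - w ∈ closure C → funkM C w u ≤ l := by
  have hbound : ∀ l : ℝ, 0 < l → l • u - w ∈ closure C → 1 ≤ l := by
    intro l hl hmem
    have h0 := psi_nonneg ψ hψ hmem
    have : ψ (l • u - w) = l * ψ u - ψ w := by simp [map_sub]
    rw [this, hu1, hw1] at h0
    linarith
  -- the defining set equals a closed set
  have hSeq : {l : ℝ | 0 < l ∧ l • u - w ∈ closure C}
      = Ici (1:ℝ) ∩ {l : ℝ | l • u - w ∈ closure C} := by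
    ext l
    constructor
    · rintro ⟨hl, hm⟩; exact ⟨hbound l hl hm, hm⟩
    · rintro ⟨hl, hm⟩; exact ⟨lt_of_lt_of_le one_pos hl, hm⟩
  have hclosed : IsClosed (Ici (1:ℝ) ∩ {l : ℝ | l • u - w ∈ closure C}) :=
    isClosed_Ici.inter (isClosed_closure.preimage (by continuity))
  have hne : ∃ l : ℝ, 0 < l ∧ l • u - w ∈ closure C := by
    obtain ⟨ε, hε, hball⟩ := Metric.isOpen_iff.1 hC.2.1 u hu
    set l : ℝ := max 1 (‖w‖ / ε + 1) with hl
    have hl1 : (1:ℝ) ≤ l := le_max_left _ _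
    have hl0 : 0 < l := lt_of_lt_of_le one_pos hl1
    have hlw : ‖w‖ / ε < l := lt_of_lt_of_le (by linarith) (le_max_right _ _)
    have hmem : u - l⁻¹ • w ∈ Metric.ball u ε := by
      rw [Metric.mem_ball, dist_eq_norm]
      have e2 : u - l⁻¹ • w - u = -(l⁻¹ • w) := by abel
      rw [e2, norm_neg, norm_smul, Real.norm_eq_abs, abs_of_pos (inv_pos.2 hl0)]
      rw [div_lt_iff₀ hε] at hlw
      calc l⁻¹ * ‖w‖ < l⁻¹ * (l * ε) := mul_lt_mul_of_pos_left hlw (inv_pos.2 hl0)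
        _ = ε := by field_simp
    refine ⟨l, hl0, subset_closure ?_⟩
    have h2 : l • (u - l⁻¹ • w) ∈ C := hC.2.2.2.1 l hl0 _ (hball hmem)
    have e : l • (u - l⁻¹ • w) = l • u - w := by
      rw [smul_sub, smul_smul, mul_inv_cancel₀ hl0.ne', one_smul]
    rwa [e] at h2
  obtain ⟨l₀, hl₀, hm₀⟩ := hne
  have hbdd : BddBelow {l : ℝ | 0 < l ∧ l • u - w ∈ closure C} :=
    ⟨1, fun l hl => hbound l hl.1 hl.2⟩
  have hmem : funkM C w u ∈ {l : ℝ | 0 < l ∧ l • u - w ∈ closure C} := by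
    rw [funkM, hSeq]
    exact hclosed.csInf_mem (by rw [← hSeq]; exact ⟨l₀, hl₀, hm₀⟩) (by rw [← hSeq]; exact hbdd)
  exact ⟨hbound _ hmem.1 hmem.2, hmem.2, fun l hl hm => csInf_le hbdd ⟨hl, hm⟩⟩

/-- distinct boundary points of a cross section of a cone containing no
lines give distinct reverse-Funk horofunctions. -/
theorem revF_horofunction_injective (C : Set V) (hC : IsOpenCone C)
    (hlines : ∀ v, v ∈ closure C → -v ∈ closure C → v = 0)
    (ψ : V →L[ℝ] ℝ) (hψ : ∀ u ∈ closure C, u ≠ 0 → 0 < ψ u)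
    (D : Set V) (hD : D = {u | u ∈ C ∧ ψ u = 1}) (hDb : Bornology.IsBounded D)
    (b : V) (hb : b ∈ D)
    (x : V) (hx : x ∈ closure D \ D) (y : V) (hy : y ∈ closure D \ D)
    (hxy : ∀ u ∈ C, revF C u x - revF C b x = revF C u y - revF C b y) :
    x = y := by
  rw [hD] at hb
  obtain ⟨hbC, hbψ⟩ := hb
  have hDsub : D ⊆ C := by rw [hD]; exact fun u hu => hu.1
  have hψone : ∀ v : V, v ∈ closure D \ D → v ∈ closure C ∧ ψ v = 1 := by
    rintro v ⟨hv1, hv2⟩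
    refine ⟨closure_mono hDsub hv1, ?_⟩
    have hsub : closure D ⊆ {u : V | ψ u = 1} := by
      apply closure_minimal
      · rw [hD]; exact fun u hu => hu.2
      · exact isClosed_eq ψ.continuous continuous_const
    exact hsub hv1
  obtain ⟨hxK, hxψ⟩ := hψone x hx
  obtain ⟨hyK, hyψ⟩ := hψone y hy
  -- main cross lemma
  have hcross : ∀ p q : V, p ∈ closure C → ψ p = 1 → q ∈ closure C → ψ q = 1 →
      (∀ u ∈ C, revF C u p - revF C b p = revF C u q - revF C b q) →
      Real.exp (revF C b q - revF C b p) • p - q ∈ closure C := by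
    intro p q hpK hpψ hqK hqψ hpq
    set E := Real.exp (revF C b q - revF C b p) with hE
    have hEpos : 0 < E := Real.exp_pos _
    have step : ∀ t : ℝ, 0 < t → t < 1 →
        E • p + (E * (t / (1 - t))) • b - q ∈ closure C := by
      intro t ht0 ht1
      have h1t : 0 < 1 - t := by linarith
      set u := (1 - t) • p + t • b with hu
      have huC : u ∈ C := by
        have h := hC.2.2.1.combo_interior_closure_mem_interior
          (x := b) (y := p) (a := t) (b := 1 - t)
          (by rw [hC.2.1.interior_eq]; exact hbC) hpK ht0 h1t.le (by ring)
        rw [hC.2.1.interior_eq] at h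
        rw [hu]; rwa [add_comm] at h
      have huψ : ψ u = 1 := by
        rw [hu]; simp [map_add, map_smul, hpψ, hbψ]
      obtain ⟨hA1, hAmem, hAle⟩ := funkM_spec hC ψ hψ huC huψ hpK hpψ
      obtain ⟨hB1, hBmem, hBle⟩ := funkM_spec hC ψ hψ huC huψ hqK hqψ
      set A := funkM C p u with hA
      set B := funkM C q u with hB
      -- upper bound on A
      have hup : A ≤ 1 / (1 - t) := by
        apply hAle
        · positivity
        · have e : (1 / (1 - t)) • u - p = (t / (1 - t)) • b := by
            rw [hu]; match_scalars <;> field_simp <;> ring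
          rw [e]
          exact smul_mem_closure_cone hC (by positivity) (subset_closure hbC)
      -- B = A * E
      have hrel : B = A * E := by
        have h := hpq u huC
        have h1 : revF C u p = Real.log A := rfl
        have h2 : revF C u q = Real.log B := rfl
        have hlog : Real.log B = Real.log A + (revF C b q - revF C b p) := by
          rw [h1, h2] at h; linarith
        calc B = Real.exp (Real.log B) := (Real.exp_log (by linarith)).symm
          _ = Real.exp (Real.log A + (revF C b q - revF C b p)) := by rw [hlog]
          _ = A * E := by rw [Real.exp_add, Real.exp_log (by linarith), hE]
      -- widen
      have hcoef : 0 ≤ E / (1 - t) - B := by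
        rw [hrel]
        have : A * E ≤ (1 / (1 - t)) * E :=
          mul_le_mul_of_nonneg_right hup hEpos.le
        calc (0:ℝ) ≤ 1 / (1 - t) * E - A * E := by linarith
          _ = E / (1 - t) - A * E := by ring
      have hmem2 : (E / (1 - t)) • u - q ∈ closure C := by
        have h2 : (E / (1 - t) - B) • u ∈ closure C :=
          smul_mem_closure_cone hC hcoef (subset_closure huC)
        have h3 := add_mem_closure_cone hC hBmem h2
        have e : (E / (1 - t)) • u - q = (B • u - q) + (E / (1 - t) - B) • u := by
          module
        rwa [← e] at h3
      have e2 : (E / (1 - t)) • u = E • p + (E * (t / (1 - t))) • b := by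
        rw [hu]; match_scalars <;> field_simp <;> ring
      rwa [e2] at hmem2
    -- pass to the limit
    have step2 : ∀ s : ℝ, 0 < s → E • p + s • b - q ∈ closure C := by
      intro s hs
      have hsE : 0 < s + E := by linarith
      have ht0 : 0 < s / (s + E) := by positivity
      have ht1 : s / (s + E) < 1 := by rw [div_lt_one hsE]; linarith
      have h := step (s / (s + E)) ht0 ht1
      have e : E * (s / (s + E) / (1 - s / (s + E))) = s := by
        field_simp
        rw [show s + E - s = E by ring]; exact div_self hEpos.ne'
      rwa [e] at h
    have hlim : Filter.Tendsto (fun n : ℕ => E • p + (1 / (n + 1) : ℝ) • b - q)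
        atTop (𝓝 (E • p - q)) := by
      have h1 : Filter.Tendsto (fun n : ℕ => (1 / (n + 1) : ℝ) • b) atTop (𝓝 ((0:ℝ) • b)) :=
        tendsto_one_div_add_atTop_nhds_zero_nat.smul_const b
      rw [zero_smul] at h1
      have h2 := (h1.const_add (E • p)).sub_const q
      simpa using h2
    exact isClosed_closure.mem_of_tendsto hlim
      (Filter.Eventually.of_forall fun n => step2 _ (by positivity))
  -- apply both ways
  have h1 := hcross x y hxK hxψ hyK hyψ hxy
  have h2 := hcross y x hyK hyψ hxK hxψ (fun u hu => (hxy u hu).symm)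
  set E := Real.exp (revF C b y - revF C b x) with hE
  set E' := Real.exp (revF C b x - revF C b y) with hE'
  have hEE' : E' * E = 1 := by
    rw [hE, hE', ← Real.exp_add]
    ring_nf
    exact Real.exp_zero
  have h3 : x - E' • y ∈ closure C := by
    have h := smul_mem_closure_cone hC (c := E') (by rw [hE']; exact (Real.exp_pos _).le) h1
    have e : E' • (E • x - y) = x - E' • y := by
      rw [smul_sub, smul_smul, hEE', one_smul]
    rwa [e] at h
  have h4 : -(x - E' • y) ∈ closure C := by
    have e : -(x - E' • y) = E' • y - x := by abel
    rw [e]; exact h2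
  have h5 := hlines _ h3 h4
  have h6 : x = E' • y := by
    have := sub_eq_zero.1 h5; exact this
  have h7 : E' = 1 := by
    have := congrArg ψ h6
    rw [map_smul, hxψ, hyψ] at this
    simpa using this.symm
  rw [h6, h7, one_smul]
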